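/- Let n ≥ 2 and let k, j satisfy 1 ≤ k and k+2 ≤ j ≤ n. Set τ = s_{k+1} s_{k+2} ⋯ s_{j−1} ∈ S_n. Then for every m with k ≤ m ≤ j−1, the bigrassmannian element u_m = s_k s_{k+1} ⋯ s_m satisfies u_m ≤_B s_k ∘ τ and ¬(u_m ≤_B τ); in particular, the Bruhat complement [e, s_k τ] \ [e, τ] contains at least two bigrassmannian elements, and these elements have pairwise different right descents. -/

import Mathlib

/-- The adjacent transposition `s_l = (l, l+1)` (0-indexed), interpreted as the
identity out of range. -/
def sT (n l : ℕ) : Equiv.Perm (Fin n) :=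
  if h : l + 1 < n then Equiv.swap ⟨l, Nat.lt_of_succ_lt h⟩ ⟨l + 1, h⟩ else 1

/-- The product `s_a s_{a+1} ⋯ s_b`, composed right to left (identity if `b < a`). -/
def ascProd (n a b : ℕ) : Equiv.Perm (Fin n) :=
  ((List.range' a (b + 1 - a)).map (sT n)).prod

/-- The Bruhat order on `S_n` via the rank-matrix criterion:
`u ≤_B w` iff for all `p q`, `#{i ≤ p : u i ≥ q} ≤ #{i ≤ p : w i ≥ q}`. -/
def bruhatLE {n : ℕ} (u w : Equiv.Perm (Fin n)) : Prop :=
  ∀ p q : Fin n,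
    (Finset.univ.filter (fun i : Fin n => i ≤ p ∧ q ≤ u i)).card ≤
      (Finset.univ.filter (fun i : Fin n => i ≤ p ∧ q ≤ w i)).card

/-- The set of right descents of a permutation: positions `l` with `w(l) > w(l+1)`. -/
def rightDescents {n : ℕ} (w : Equiv.Perm (Fin n)) : Set ℕ :=
  {l | ∃ h : l + 1 < n, w ⟨l + 1, h⟩ < w ⟨l, Nat.lt_of_succ_lt h⟩}

/-- For `τ = s_{k+1} ⋯ s_{j-1}` with `j ≥ k+2`: each bigrassmannian element
`u_m = s_k s_{k+1} ⋯ s_m` with `k ≤ m ≤ j-1` lies in the Bruhat interval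
`[e, s_k τ]` but not in `[e, τ]`; in particular the Bruhat complement contains at
least two bigrassmannian elements, and they have pairwise different right descents. -/
lemma sT_val {n l : ℕ} (h : l + 1 < n) (x : Fin n) :
    ((sT n l) x : ℕ) = if (x:ℕ) = l then l+1 else if (x:ℕ) = l+1 then l else (x:ℕ) := by
  unfold sT
  rw [dif_pos h, Equiv.swap_apply_def]
  split_ifs with h1 h2 h3 h4 h5 <;>
    simp_all [Fin.ext_iff] <;> omega
lemma sT_invol {n l : ℕ} (x : Fin n) : sT n l (sT n l x) = x := by
  unfold sT
  split_ifs with h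
  · exact Equiv.swap_apply_self _ _ _
  · rfl
lemma ascProd_head (n a b : ℕ) (hab : a ≤ b) :
    ascProd n a b = sT n a * ascProd n (a+1) b := by
  unfold ascProd
  have h1 : b + 1 - a = (b - a) + 1 := by omega
  have h2 : b + 1 - (a+1) = b - a := by omega
  rw [h1, h2, List.range'_succ, List.map_cons, List.prod_cons]
lemma ascProd_nil (n a b : ℕ) (h : b < a) : ascProd n a b = 1 := by
  unfold ascProd
  have : b + 1 - a = 0 := by omega
  rw [this]; rfl
lemma ascProd_concat (n a b : ℕ) (hab : a ≤ b + 1) :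
    ascProd n a (b+1) = ascProd n a b * sT n (b+1) := by
  unfold ascProd
  have h1 : b + 1 + 1 - a = (b + 1 - a) + 1 := by omega
  rw [h1, List.range'_concat, List.map_append, List.prod_append]
  simp only [Nat.one_mul]
  have : a + (b + 1 - a) = b + 1 := by omega
  rw [this, List.map_singleton, List.prod_singleton]
lemma ascVal (n : ℕ) : ∀ (d a : ℕ), a + d + 1 < n → ∀ i : Fin n,
    ((ascProd n a (a + d)) i : ℕ) =
      if (i:ℕ) < a then (i:ℕ) else if (i:ℕ) ≤ a + d then (i:ℕ)+1
      else if (i:ℕ) = a+d+1 then a else (i:ℕ) := by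
  intro d
  induction d with
  | zero =>
    intro a hb i
    have := i.isLt
    rw [ascProd_head n a (a+0) (by omega), ascProd_nil n (a+1) (a+0) (by omega)]
    simp only [mul_one, Nat.add_zero] at *
    rw [sT_val hb]
    split_ifs <;> omega
  | succ d ih =>
    intro a hb i
    have := i.isLt
    rw [ascProd_head n a (a+(d+1)) (by omega)]
    have hrec : a + (d+1) = (a+1) + d := by omega
    rw [Equiv.Perm.mul_apply]
    have hv := ih (a+1) (by omega) i
    have h2 : (a+1) + d = a + (d+1) := by omega
    rw [h2] at hv
    rw [sT_val (by omega), hv]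
    split_ifs <;> omega
lemma ascVal' {n a b : ℕ} (hab : a ≤ b) (hb : b + 1 < n) (i : Fin n) :
    ((ascProd n a b) i : ℕ) =
      if (i:ℕ) < a then (i:ℕ) else if (i:ℕ) ≤ b then (i:ℕ)+1
      else if (i:ℕ) = b+1 then a else (i:ℕ) := by
  have h : b = a + (b - a) := by omega
  rw [h] at hb ⊢
  exact ascVal n (b-a) a hb i
lemma bruhat_step {n : ℕ} (u : Equiv.Perm (Fin n)) (l : ℕ) (h : l + 1 < n)
    (hle : u ⟨l, Nat.lt_of_succ_lt h⟩ ≤ u ⟨l+1, h⟩) :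
    bruhatLE u (u * sT n l) := by
  intro p q
  have hB : (Finset.univ.filter (fun i : Fin n => i ≤ p ∧ q ≤ (u * sT n l) i)).card
      = (Finset.univ.filter (fun x : Fin n => sT n l x ≤ p ∧ q ≤ u x)).card := by
    apply Finset.card_nbij (fun i => sT n l i)
    · intro a ha
      simp only [Finset.mem_coe, Finset.mem_filter, Finset.mem_univ, true_and,
        Equiv.Perm.mul_apply] at ha ⊢
      rw [sT_invol]
      exact ⟨(Finset.mem_filter.mp ha).2.1, (Finset.mem_filter.mp ha).2.2⟩
    · intro x _ y _ hxy
      have := congrArg (sT n l) hxy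
      rwa [sT_invol, sT_invol] at this
    · intro x hx
      simp only [Finset.coe_filter, Set.mem_setOf_eq, Finset.mem_univ, true_and,
        Set.mem_image] at hx ⊢
      exact ⟨sT n l x, by rw [Equiv.Perm.mul_apply, sT_invol]; exact ⟨hx.1, hx.2⟩,
        sT_invol x⟩
  rw [hB]
  by_cases hp : (p:ℕ) = l
  · -- injection sending l to l+1
    apply Finset.card_le_card_of_injOn
      (fun x : Fin n => if (x:ℕ) = l then (⟨l+1, h⟩ : Fin n) else x)
    · intro x hx
      simp only [Finset.mem_coe, Finset.mem_filter, Finset.mem_univ, true_and] at hx ⊢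
      by_cases hxl : (x:ℕ) = l
      · rw [if_pos hxl]
        constructor
        · rw [Fin.le_def, sT_val h]
          simp only [Fin.val_mk]
          split_ifs <;> omega
        · refine le_trans hx.2 (le_trans (le_of_eq ?_) hle)
          congr 1
          exact Fin.ext hxl
      · rw [if_neg hxl]
        have hxlt : (x:ℕ) < l := by
          have := hx.1
          rw [Fin.le_def] at this
          omega
        refine ⟨?_, hx.2⟩
        rw [Fin.le_def, sT_val h]
        split_ifs <;> omega
    · intro x hx y hy hxy
      simp only [Finset.coe_filter, Set.mem_setOf_eq, Finset.mem_univ, true_and] at hx hy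
      have hxp : (x:ℕ) ≤ l := by have := hx.1; rw [Fin.le_def] at this; omega
      have hyp : (y:ℕ) ≤ l := by have := hy.1; rw [Fin.le_def] at this; omega
      simp only at hxy
      by_cases hxl : (x:ℕ) = l <;> by_cases hyl : (y:ℕ) = l
      · rw [if_pos hxl, if_pos hyl] at hxy
        exact Fin.ext (by omega)
      · rw [if_pos hxl, if_neg hyl] at hxy
        exfalso
        have hy1 : (y:ℕ) = l + 1 := by rw [← hxy]
        omega
      · rw [if_neg hxl, if_pos hyl] at hxy
        exfalso
        have hx1 : (x:ℕ) = l + 1 := by rw [hxy]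
        omega
      · rw [if_neg hxl, if_neg hyl] at hxy
        exact hxy
  · -- the two filters coincide
    apply le_of_eq
    congr 1
    apply Finset.filter_congr
    intro x _
    have hx := x.isLt
    have : (x ≤ p) ↔ (sT n l x ≤ p) := by
      rw [Fin.le_def, Fin.le_def, sT_val h]
      split_ifs <;> omega
    rw [← this]
lemma bruhatLE_refl {n : ℕ} (u : Equiv.Perm (Fin n)) : bruhatLE u u :=
  fun _ _ => le_rfl
lemma bruhatLE_trans {n : ℕ} {u v w : Equiv.Perm (Fin n)}
    (h1 : bruhatLE u v) (h2 : bruhatLE v w) : bruhatLE u w :=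
  fun p q => le_trans (h1 p q) (h2 p q)
lemma cycle_step (n k m : ℕ) (hkm : k ≤ m) (h2 : m + 2 < n) :
    bruhatLE (ascProd n k m) (ascProd n k (m+1)) := by
  rw [ascProd_concat n k m (by omega)]
  apply bruhat_step _ (m+1) (by omega)
  rw [Fin.le_def]
  rw [ascVal' hkm (by omega), ascVal' hkm (by omega)]
  simp only [Fin.val_mk]
  split_ifs <;> omega
lemma cycle_chain (n k : ℕ) : ∀ m m' : ℕ, k ≤ m → m ≤ m' → m' + 1 < n →
    bruhatLE (ascProd n k m) (ascProd n k m') := by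
  intro m m' hkm hmm'
  induction m' with
  | zero =>
    intro _
    have : m = 0 := by omega
    subst this
    exact bruhatLE_refl _
  | succ m' ih =>
    intro hn
    by_cases hm : m = m' + 1
    · subst hm; exact bruhatLE_refl _
    · have h1 : m ≤ m' := by omega
      exact bruhatLE_trans (ih h1 (by omega)) (cycle_step n k m' (by omega) (by omega))
lemma descents_eq {n k m : ℕ} (hkm : k ≤ m) (hm : m + 1 < n) :
    rightDescents (ascProd n k m) = {m} := by
  ext l
  simp only [rightDescents, Set.mem_setOf_eq, Set.mem_singleton_iff]
  constructor
  · rintro ⟨h, hlt⟩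
    rw [Fin.lt_def] at hlt
    rw [ascVal' hkm hm, ascVal' hkm hm] at hlt
    simp only [Fin.val_mk] at hlt
    by_contra hne
    split_ifs at hlt <;> omega
  · rintro rfl
    refine ⟨hm, ?_⟩
    rw [Fin.lt_def, ascVal' hkm hm, ascVal' hkm hm]
    simp only [Fin.val_mk]
    split_ifs <;> omega

theorem stmt9 (n k j : ℕ) (hn : 2 ≤ n) (hkj : k + 2 ≤ j) (hj : j < n) :
    (∀ m : ℕ, k ≤ m → m ≤ j - 1 →
      bruhatLE (ascProd n k m) (sT n k * ascProd n (k + 1) (j - 1)) ∧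
      ¬ bruhatLE (ascProd n k m) (ascProd n (k + 1) (j - 1))) ∧
    (∀ m m' : ℕ, k ≤ m → m ≤ j - 1 → k ≤ m' → m' ≤ j - 1 → m ≠ m' →
      rightDescents (ascProd n k m) ≠ rightDescents (ascProd n k m')) := by
  constructor
  · intro m hkm hmj
    constructor
    · rw [← ascProd_head n k (j-1) (by omega)]
      exact cycle_chain n k m (j-1) hkm hmj (by omega)
    · intro hB
      have hkn : k < n := by omega
      have hk1n : k + 1 < n := by omega
      have h := hB ⟨k, hkn⟩ ⟨k+1, hk1n⟩
      have hL : (⟨k, hkn⟩ : Fin n) ∈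
          Finset.univ.filter (fun i : Fin n =>
            i ≤ ⟨k, hkn⟩ ∧ (⟨k+1, hk1n⟩ : Fin n) ≤ (ascProd n k m) i) := by
        simp only [Finset.mem_filter, Finset.mem_univ, true_and]
        refine ⟨le_rfl, ?_⟩
        rw [Fin.le_def, ascVal' hkm (by omega)]
        simp only [Fin.val_mk]
        split_ifs <;> omega
      have hR : Finset.univ.filter (fun i : Fin n =>
          i ≤ ⟨k, hkn⟩ ∧ (⟨k+1, hk1n⟩ : Fin n) ≤ (ascProd n (k+1) (j-1)) i) = ∅ := by
        rw [Finset.filter_eq_empty_iff]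
        rintro i - ⟨hip, hq⟩
        rw [Fin.le_def] at hip hq
        rw [ascVal' (a := k+1) (b := j-1) (by omega) (by omega)] at hq
        simp only [Fin.val_mk] at hip hq
        split_ifs at hq <;> omega
      rw [hR] at h
      simp only [Finset.card_empty, Nat.le_zero, Finset.card_eq_zero] at h
      rw [Finset.eq_empty_iff_forall_notMem] at h
      exact h _ hL
  · intro m m' hkm hmj hkm' hmj' hne
    rw [descents_eq hkm (by omega), descents_eq hkm' (by omega)]
    simp only [ne_eq, Set.singleton_eq_singleton_iff]
    exact hne
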